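/- For all n ≥ 1, the dimension of the space P_↗(n) of n-ary operations of the operad P_↗ equals r_n, the number of planar rooted forests with n vertices. -/
import Mathlib


/-- Planar rooted trees. -/
inductive PTree : Type
  | node : List PTree → PTree

abbrev Forest : Type := List PTree

mutual
def PTree.weight : PTree → ℕ
  | .node c => 1 + Forest.weight c
def Forest.weight : Forest → ℕ
  | [] => 0
  | t :: r => PTree.weight t + Forest.weight r
end

/-- Formal expressions in two binary operations `m` and `↗` (here `g`): these are the
planar binary trees with internal vertices decorated by the two generating operations
of the free non-symmetric operad on `m` and `↗`. -/
inductive Expr : Type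
  | leaf : Expr
  | m : Expr → Expr → Expr
  | g : Expr → Expr → Expr

/-- The arity (number of leaves) of an expression. -/
def Expr.arity : Expr → ℕ
  | .leaf => 1
  | .m a b => a.arity + b.arity
  | .g a b => a.arity + b.arity

/-- The congruence generated by the defining relations of the operad `P_↗`:
`m∘(↗,I) = ↗∘(I,m)`, `m∘(m,I) = m∘(I,m)`, `↗∘(↗,I) = ↗∘(I,↗)`,
together with compatibility with the operadic (tree) compositions. -/
inductive RelNE : Expr → Expr → Prop
  | rel1 (a b c : Expr) : RelNE (.m (.g a b) c) (.g a (.m b c))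
  | rel2 (a b c : Expr) : RelNE (.m (.m a b) c) (.m a (.m b c))
  | rel3 (a b c : Expr) : RelNE (.g (.g a b) c) (.g a (.g b c))
  | m_left {a a' : Expr} (b : Expr) : RelNE a a' → RelNE (.m a b) (.m a' b)
  | m_right (a : Expr) {b b' : Expr} : RelNE b b' → RelNE (.m a b) (.m a b')
  | g_left {a a' : Expr} (b : Expr) : RelNE a a' → RelNE (.g a b) (.g a' b)
  | g_right (a : Expr) {b b' : Expr} : RelNE b b' → RelNE (.g a b) (.g a b')

def graft (F : Forest) : Forest → Forest
  | [] => F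
  | (.node d) :: r => .node (graft F d) :: r

theorem graft_nil (F : Forest) : graft F [] = F := by simp [graft]

theorem graft_cons (F : Forest) (d : Forest) (r : Forest) :
    graft F (.node d :: r) = .node (graft F d) :: r := by simp [graft]

theorem graft_ne (F G : Forest) (hG : G ≠ []) : graft F G ≠ [] := by
  match G with
  | (.node d) :: r => rw [graft_cons]; simp

theorem wnode (c : Forest) : PTree.weight (.node c) = 1 + c.weight := by
  simp [PTree.weight]

theorem wnil : Forest.weight [] = 0 := by simp [Forest.weight]

theorem wcons (t : PTree) (r : Forest) :
    Forest.weight (t :: r) = t.weight + r.weight := by simp [Forest.weight]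

theorem wpos (t : PTree) : 1 ≤ t.weight := by
  match t with
  | .node c => rw [wnode]; omega

theorem graft_append (F G H : Forest) (hG : G ≠ []) :
    graft F G ++ H = graft F (G ++ H) := by
  match G with
  | (.node d) :: r => rw [graft_cons, List.cons_append, List.cons_append, graft_cons]

theorem graft_assoc (A B C : Forest) (hB : B ≠ []) :
    graft (graft A B) C = graft A (graft B C) := by
  match C with
  | [] => rw [graft_nil, graft_nil]
  | (.node d) :: r =>
    rw [graft_cons, graft_cons, graft_cons, graft_assoc A B d hB]
termination_by sizeOf C

theorem weight_append (F G : Forest) :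
    Forest.weight (F ++ G) = F.weight + G.weight := by
  induction F with
  | nil => simp [wnil]
  | cons t r ih => rw [List.cons_append, wcons, wcons, ih]; omega

theorem weight_graft (F G : Forest) (hG : G ≠ []) :
    (graft F G).weight = F.weight + G.weight := by
  match G with
  | (.node d) :: r =>
    rw [graft_cons, wcons, wcons, wnode, wnode]
    by_cases hd : d = []
    · subst hd; rw [graft_nil, wnil]; omega
    · rw [weight_graft F d hd]; omega
termination_by sizeOf G

/-- Evaluation of an expression in the forest algebra, at `(bullet, ..., bullet)`. -/
def evalE : Expr → Forest
  | .leaf => [.node []]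
  | .m a b => evalE a ++ evalE b
  | .g a b => graft (evalE a) (evalE b)

theorem evalE_ne (e : Expr) : evalE e ≠ [] := by
  induction e with
  | leaf => simp [evalE]
  | m a b iha ihb =>
    show evalE a ++ evalE b ≠ []
    intro h; exact iha (List.append_eq_nil_iff.mp h).1
  | g a b iha ihb => exact graft_ne _ _ ihb

theorem weight_evalE (e : Expr) : (evalE e).weight = e.arity := by
  induction e with
  | leaf => show Forest.weight [.node []] = 1; rw [wcons, wnode, wnil]
  | m a b iha ihb =>
    show Forest.weight (evalE a ++ evalE b) = _
    rw [weight_append, iha, ihb]; rfl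
  | g a b iha ihb =>
    show Forest.weight (graft (evalE a) (evalE b)) = _
    rw [weight_graft _ _ (evalE_ne b), iha, ihb]; rfl

theorem evalE_rel {a b : Expr} (h : RelNE a b) : evalE a = evalE b := by
  induction h with
  | rel1 a b c =>
    show graft (evalE a) (evalE b) ++ evalE c = graft (evalE a) (evalE b ++ evalE c)
    exact graft_append _ _ _ (evalE_ne b)
  | rel2 a b c =>
    show (evalE a ++ evalE b) ++ evalE c = evalE a ++ (evalE b ++ evalE c)
    exact List.append_assoc _ _ _
  | rel3 a b c =>
    show graft (graft (evalE a) (evalE b)) (evalE c) = graft (evalE a) (graft (evalE b) (evalE c))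
    exact graft_assoc _ _ _ (evalE_ne b)
  | m_left b h ih => show evalE _ ++ _ = evalE _ ++ _; rw [ih]
  | m_right a h ih => show _ ++ evalE _ = _ ++ evalE _; rw [ih]
  | g_left b h ih => show graft _ _ = graft _ _; rw [ih]
  | g_right a h ih => show graft _ _ = graft _ _; rw [ih]

theorem evalE_eqv {a b : Expr} (h : Relation.EqvGen RelNE a b) : evalE a = evalE b := by
  induction h with
  | rel _ _ h => exact evalE_rel h
  | refl => rfl
  | symm _ _ _ ih => exact ih.symm
  | trans _ _ _ _ _ ih1 ih2 => exact ih1.trans ih2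

mutual
/-- Canonical expression representing a planar tree. -/
def reprT : PTree → Expr
  | .node [] => .leaf
  | .node (t :: c) => .g (reprF (t :: c)) .leaf
/-- Canonical expression representing a nonempty forest. -/
def reprF : Forest → Expr
  | [] => .leaf
  | [t] => reprT t
  | t :: r :: s => .m (reprT t) (reprF (r :: s))
end

theorem reprT_nil : reprT (.node []) = .leaf := by simp [reprT]
theorem reprT_cons (t : PTree) (c : Forest) :
    reprT (.node (t :: c)) = .g (reprF (t :: c)) .leaf := by simp [reprT]
theorem reprF_single (t : PTree) : reprF [t] = reprT t := by simp [reprF]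
theorem reprF_cons2 (t r : PTree) (s : Forest) :
    reprF (t :: r :: s) = .m (reprT t) (reprF (r :: s)) := by simp [reprF]

mutual
theorem evalE_reprT (t : PTree) : evalE (reprT t) = [t] := by
  match t with
  | .node [] => rw [reprT_nil]; rfl
  | .node (u :: c) =>
    rw [reprT_cons]
    show graft (evalE (reprF (u :: c))) (evalE .leaf) = _
    rw [evalE_reprF (u :: c) (by simp)]
    show graft (u :: c) [.node []] = _
    rw [graft_cons, graft_nil]
theorem evalE_reprF (F : Forest) (hF : F ≠ []) : evalE (reprF F) = F := by
  match F with
  | [t] => rw [reprF_single]; exact evalE_reprT t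
  | t :: r :: s =>
    rw [reprF_cons2]
    show evalE (reprT t) ++ evalE (reprF (r :: s)) = _
    rw [evalE_reprT, evalE_reprF (r :: s) (by simp)]
    rfl
end

theorem arity_reprF (F : Forest) (hF : F ≠ []) : (reprF F).arity = F.weight := by
  rw [← weight_evalE, evalE_reprF F hF]

open Relation in
theorem eqv_m_left {a a' : Expr} (b : Expr) (h : EqvGen RelNE a a') :
    EqvGen RelNE (.m a b) (.m a' b) := by
  induction h with
  | rel _ _ h => exact EqvGen.rel _ _ (RelNE.m_left b h)
  | refl => exact EqvGen.refl _
  | symm _ _ _ ih => exact ih.symm _ _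
  | trans _ _ _ _ _ ih1 ih2 => exact ih1.trans _ _ _ ih2

open Relation in
theorem eqv_m_right (a : Expr) {b b' : Expr} (h : EqvGen RelNE b b') :
    EqvGen RelNE (.m a b) (.m a b') := by
  induction h with
  | rel _ _ h => exact EqvGen.rel _ _ (RelNE.m_right a h)
  | refl => exact EqvGen.refl _
  | symm _ _ _ ih => exact ih.symm _ _
  | trans _ _ _ _ _ ih1 ih2 => exact ih1.trans _ _ _ ih2

open Relation in
theorem eqv_g_left {a a' : Expr} (b : Expr) (h : EqvGen RelNE a a') :
    EqvGen RelNE (.g a b) (.g a' b) := by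
  induction h with
  | rel _ _ h => exact EqvGen.rel _ _ (RelNE.g_left b h)
  | refl => exact EqvGen.refl _
  | symm _ _ _ ih => exact ih.symm _ _
  | trans _ _ _ _ _ ih1 ih2 => exact ih1.trans _ _ _ ih2

open Relation in
theorem eqv_g_right (a : Expr) {b b' : Expr} (h : EqvGen RelNE b b') :
    EqvGen RelNE (.g a b) (.g a b') := by
  induction h with
  | rel _ _ h => exact EqvGen.rel _ _ (RelNE.g_right a h)
  | refl => exact EqvGen.refl _
  | symm _ _ _ ih => exact ih.symm _ _
  | trans _ _ _ _ _ ih1 ih2 => exact ih1.trans _ _ _ ih2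

open Relation in
theorem eqv_m_repr (F G : Forest) (hF : F ≠ []) (hG : G ≠ []) :
    EqvGen RelNE (.m (reprF F) (reprF G)) (reprF (F ++ G)) := by
  match F with
  | [t] =>
    match G with
    | u :: s =>
      rw [reprF_single, List.singleton_append, reprF_cons2]
      exact EqvGen.refl _
  | t :: r :: s =>
    rw [reprF_cons2]
    have h1 : EqvGen RelNE (Expr.m (.m (reprT t) (reprF (r :: s))) (reprF G))
        (.m (reprT t) (.m (reprF (r :: s)) (reprF G))) :=
      EqvGen.rel _ _ (RelNE.rel2 _ _ _)
    have h2 := eqv_m_right (reprT t) (eqv_m_repr (r :: s) G (by simp) hG)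
    have h3 : reprF ((t :: r :: s) ++ G) = .m (reprT t) (reprF ((r :: s) ++ G)) := by
      match G with
      | u :: s' => rw [List.cons_append, List.cons_append, reprF_cons2]
    rw [h3]
    exact h1.trans _ _ _ h2

open Relation in
theorem eqv_g_repr (F G : Forest) (hF : F ≠ []) (hG : G ≠ []) :
    EqvGen RelNE (.g (reprF F) (reprF G)) (reprF (graft F G)) := by
  match G with
  | [.node d] =>
    by_cases hd : d = []
    · subst hd
      rw [graft_cons, graft_nil, reprF_single, reprF_single, reprT_nil]
      match F with
      | u :: c => rw [reprT_cons]; exact EqvGen.refl _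
    · match d with
      | v :: d' =>
        rw [reprF_single, reprT_cons, graft_cons, reprF_single]
        have h1 : EqvGen RelNE (Expr.g (reprF F) (.g (reprF (v :: d')) .leaf))
            (.g (.g (reprF F) (reprF (v :: d'))) .leaf) :=
          (EqvGen.rel _ _ (RelNE.rel3 _ _ _)).symm _ _
        have h2 := eqv_g_left Expr.leaf (eqv_g_repr F (v :: d') hF (by simp))
        have h3 : reprT (.node (graft F (v :: d'))) = .g (reprF (graft F (v :: d'))) .leaf := by
          have hne := graft_ne F (v :: d') (by simp)
          match hgr : graft F (v :: d') with
          | w :: G' => rw [reprT_cons]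
          | [] => exact absurd hgr hne
        rw [h3]
        exact h1.trans _ _ _ h2
  | t :: r :: s =>
    rw [reprF_cons2]
    have h1 : EqvGen RelNE (Expr.g (reprF F) (.m (reprT t) (reprF (r :: s))))
        (.m (.g (reprF F) (reprT t)) (reprF (r :: s))) :=
      (EqvGen.rel _ _ (RelNE.rel1 _ _ _)).symm _ _
    have h2 : EqvGen RelNE (Expr.g (reprF F) (reprT t)) (reprF (graft F [t])) := by
      have := eqv_g_repr F [t] hF (by simp)
      rw [reprF_single] at this
      exact this
    have h4 : EqvGen RelNE (Expr.m (.g (reprF F) (reprT t)) (reprF (r :: s)))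
        (.m (reprF (graft F [t])) (reprF (r :: s))) := eqv_m_left _ h2
    have h5 := eqv_m_repr (graft F [t]) (r :: s) (graft_ne F [t] (by simp)) (by simp)
    have h6 : graft F [t] ++ r :: s = graft F (t :: r :: s) := by
      match t with
      | .node d => rw [graft_cons, graft_cons, List.cons_append, List.nil_append]
    rw [h6] at h5
    exact (h1.trans _ _ _ h4).trans _ _ _ h5
termination_by sizeOf G
decreasing_by
  all_goals simp
  all_goals try omega
  cases r with
  | node c => simp; omega

open Relation in
theorem eqv_normal (e : Expr) : EqvGen RelNE e (reprF (evalE e)) := by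
  induction e with
  | leaf =>
    show EqvGen RelNE _ (reprF [.node []])
    rw [reprF_single, reprT_nil]
    exact EqvGen.refl _
  | m a b iha ihb =>
    have step : EqvGen RelNE (.m a b) (.m (reprF (evalE a)) (reprF (evalE b))) :=
      (eqv_m_left b iha).trans _ _ _ (eqv_m_right _ ihb)
    exact step.trans _ _ _ (eqv_m_repr _ _ (evalE_ne a) (evalE_ne b))
  | g a b iha ihb =>
    have step : EqvGen RelNE (.g a b) (.g (reprF (evalE a)) (reprF (evalE b))) :=
      (eqv_g_left b iha).trans _ _ _ (eqv_g_right _ ihb)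
    exact step.trans _ _ _ (eqv_g_repr _ _ (evalE_ne a) (evalE_ne b))

theorem ne_of_weight_pos {F : Forest} (h : 1 ≤ F.weight) : F ≠ [] := by
  intro hF; subst hF; rw [wnil] at h; omega

/-- `P_↗(n)` has the equivalence classes of `n`-ary expressions as a basis, so its
dimension is the number of such classes. It equals `r_n`, the number of planar rooted
forests with `n` vertices. -/
theorem dim_P_graftLeaf (n : ℕ) (hn : 1 ≤ n) :
    Nat.card (Quot (fun a b : {e : Expr // e.arity = n} => Relation.EqvGen RelNE a.1 b.1)) =
      Nat.card {F : Forest // Forest.weight F = n} := by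
  refine Nat.card_congr ?_
  refine
    { toFun := Quot.lift (fun e => (⟨evalE e.1, by rw [weight_evalE]; exact e.2⟩ :
        {F : Forest // Forest.weight F = n}))
        (fun a b h => Subtype.ext (evalE_eqv h))
      invFun := fun F => Quot.mk _ ⟨reprF F.1,
        by rw [arity_reprF F.1 (ne_of_weight_pos (le_of_le_of_eq hn F.2.symm))]; exact F.2⟩
      left_inv := ?_
      right_inv := ?_ }
  · refine Quot.ind (fun e => ?_)
    exact Quot.sound ((eqv_normal e.1).symm _ _)
  · intro F
    exact Subtype.ext (evalE_reprF F.1 (ne_of_weight_pos (le_of_le_of_eq hn F.2.symm)))
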